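/- For a positive integer n, there exists a finite set S of rational numbers with |S| = n, closed under negation (x ∈ S implies −x ∈ S), and satisfying Σ_{x∈S} x² = n/2, if and only if n ∉ {1, 2, 3, 7}. -/
import Mathlib

/-! ### Number-theoretic impossibility lemmas -/

lemma sq_mod8 (a : ℤ) :
    (a % 2 = 0 ∧ (a^2 % 8 = 0 ∨ a^2 % 8 = 4)) ∨ (a % 2 = 1 ∧ a^2 % 8 = 1) := by
  obtain ⟨q, hq⟩ : ∃ q, a = 8*q + a % 8 := ⟨a/8, by omega⟩
  have h1 : 0 ≤ a % 8 := Int.emod_nonneg a (by norm_num)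
  have h2 : a % 8 < 8 := Int.emod_lt_of_pos a (by norm_num)
  set r := a % 8 with hr
  have hsq : a^2 = 8*(8*q^2 + 2*q*r) + r^2 := by rw [hq]; ring
  have hsqmod : a^2 % 8 = r^2 % 8 := by omega
  have hamod : a % 2 = r % 2 := by omega
  clear hsq hq hr
  generalize a^2 = A at hsqmod ⊢
  interval_cases r <;> norm_num at hsqmod hamod ⊢ <;> omega

lemma descent2 : ∀ N : ℕ, ∀ k a d : ℤ, (k = 2 ∨ k = 3) → d.natAbs = N →
    a^2 = k * d^2 → d = 0 := by
  intro N
  induction N using Nat.strong_induction_on with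
  | _ N ih =>
    intro k a d hk hN heq
    by_contra hd0
    have ha := sq_mod8 a
    have hd := sq_mod8 d
    have h2 : 2 ∣ a ∧ 2 ∣ d := by
      rcases hk with rfl | rfl <;>
      · generalize hA : a^2 = A at ha heq
        generalize hD : d^2 = D at hd heq
        omega
    obtain ⟨⟨a', rfl⟩, ⟨d', rfl⟩⟩ := h2
    have heq' : a'^2 = k * d'^2 := by nlinarith [heq]
    have hlt : d'.natAbs < N := by
      have : (2*d').natAbs = 2 * d'.natAbs := by simp [Int.natAbs_mul]
      omega
    exact hd0 (by rw [ih d'.natAbs hlt k a' d' hk rfl heq']; ring)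

lemma descent7 : ∀ N : ℕ, ∀ a b c d : ℤ, d.natAbs = N →
    a^2 + b^2 + c^2 = 7 * d^2 → d = 0 := by
  intro N
  induction N using Nat.strong_induction_on with
  | _ N ih =>
    intro a b c d hN heq
    by_contra hd0
    have ha := sq_mod8 a
    have hb := sq_mod8 b
    have hc := sq_mod8 c
    have hd := sq_mod8 d
    have h2 : 2 ∣ a ∧ 2 ∣ b ∧ 2 ∣ c ∧ 2 ∣ d := by
      generalize hA : a^2 = A at ha heq
      generalize hB : b^2 = B at hb heq
      generalize hC : c^2 = C at hc heq
      generalize hD : d^2 = D at hd heq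
      omega
    obtain ⟨⟨a', rfl⟩, ⟨b', rfl⟩, ⟨c', rfl⟩, ⟨d', rfl⟩⟩ := h2
    have heq' : a'^2 + b'^2 + c'^2 = 7 * d'^2 := by nlinarith [heq]
    have hlt : d'.natAbs < N := by
      have : (2*d').natAbs = 2 * d'.natAbs := by simp [Int.natAbs_mul]
      omega
    exact hd0 (by rw [ih d'.natAbs hlt a' b' c' d' rfl heq']; ring)

lemma num_eq (x : ℚ) : (x.num : ℚ) = x * x.den := by
  have hd : ((x.den : ℚ)) ≠ 0 := by exact_mod_cast x.den_nz
  have h := Rat.num_div_den x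
  rw [div_eq_iff hd] at h
  exact h

lemma no_sq (k : ℤ) (hk : k = 2 ∨ k = 3) (r : ℚ) : r^2 ≠ (k : ℚ) := by
  intro h
  have key : (r.num : ℚ)^2 = (k:ℚ) * (r.den : ℚ)^2 := by
    rw [num_eq r, mul_pow, h]
  have keyz : r.num^2 = k * (r.den : ℤ)^2 := by exact_mod_cast key
  have h0 := descent2 (r.den : ℤ).natAbs k r.num (r.den : ℤ) hk rfl keyz
  exact r.den_nz (by exact_mod_cast h0)

lemma no_seven (x y z : ℚ) : x^2 + y^2 + z^2 ≠ 7 := by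
  intro h
  have key : ((x.num * y.den * z.den : ℤ) : ℚ)^2 + ((x.den * y.num * z.den : ℤ) : ℚ)^2
      + ((x.den * y.den * z.num : ℤ) : ℚ)^2 = 7 * ((x.den * y.den * z.den : ℤ) : ℚ)^2 := by
    push_cast
    rw [num_eq x, num_eq y, num_eq z]
    linear_combination ((x.den:ℚ) * y.den * z.den)^2 * h
  have keyz : (x.num * y.den * z.den)^2 + ((x.den : ℤ) * y.num * z.den)^2
      + ((x.den : ℤ) * y.den * z.num)^2 = 7 * ((x.den : ℤ) * y.den * z.den)^2 := by
    exact_mod_cast key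
  have h0 := descent7 _ _ _ _ _ rfl keyz
  have hne : (x.den:ℤ) * y.den * z.den ≠ 0 := by positivity
  exact hne h0

/-! ### Decomposition of an antipodal set -/

lemma decomp (S : Finset ℚ) (hneg : ∀ x ∈ S, -x ∈ S) :
    ∃ T : Finset ℚ, (∀ x ∈ T, 0 < x) ∧
      S.card = 2 * T.card + (if (0:ℚ) ∈ S then 1 else 0) ∧
      ∑ x ∈ S, x^2 = 2 * ∑ x ∈ T, x^2 := by
  classical
  set T : Finset ℚ := S.filter (fun x => 0 < x) with hT
  set N : Finset ℚ := S.filter (fun x => x < 0) with hN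
  set Z : Finset ℚ := S.filter (fun x => x = 0) with hZ
  have hNeq : N = T.image (fun x => -x) := by
    ext y
    simp only [hN, hT, Finset.mem_filter, Finset.mem_image]
    constructor
    · rintro ⟨hyS, hy0⟩
      exact ⟨-y, ⟨hneg y hyS, by linarith⟩, by ring⟩
    · rintro ⟨t, ⟨htS, ht0⟩, rfl⟩
      exact ⟨hneg t htS, by linarith⟩
  have hinj : Set.InjOn (fun x : ℚ => -x) T := fun x _ y _ h => by simpa using h
  have hdisjTN : Disjoint T N := by
    rw [Finset.disjoint_left]
    intro x hx hx'
    simp only [hT, hN, Finset.mem_filter] at hx hx'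
    linarith [hx.2, hx'.2]
  have hdisjTNZ : Disjoint (T ∪ N) Z := by
    rw [Finset.disjoint_left]
    intro x hx hx'
    simp only [hT, hN, hZ, Finset.mem_filter, Finset.mem_union] at hx hx'
    rcases hx with h | h <;> rw [hx'.2] at h <;> linarith [h.2]
  have hSeq : S = (T ∪ N) ∪ Z := by
    ext x
    simp only [hT, hN, hZ, Finset.mem_union, Finset.mem_filter]
    constructor
    · intro hx
      rcases lt_trichotomy x 0 with h | h | h
      · exact Or.inl (Or.inr ⟨hx, h⟩)
      · exact Or.inr ⟨hx, h⟩
      · exact Or.inl (Or.inl ⟨hx, h⟩)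
    · rintro ((h | h) | h) <;> exact h.1
  have hcardN : N.card = T.card := by
    rw [hNeq, Finset.card_image_of_injOn hinj]
  have hZcard : Z.card = if (0:ℚ) ∈ S then 1 else 0 := by
    split_ifs with h0
    · rw [Finset.card_eq_one]
      refine ⟨0, ?_⟩
      ext x
      simp only [hZ, Finset.mem_filter, Finset.mem_singleton]
      exact ⟨fun h => h.2, fun h => ⟨h ▸ h0, h⟩⟩
    · rw [Finset.card_eq_zero]
      ext x
      simp only [hZ, Finset.mem_filter, Finset.notMem_empty, iff_false, not_and]
      rintro hx rfl
      exact h0 hx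
  have hsumN : ∑ x ∈ N, x^2 = ∑ x ∈ T, x^2 := by
    rw [hNeq, Finset.sum_image (fun x hx y hy h => hinj hx hy h)]
    apply Finset.sum_congr rfl
    intro x _
    ring
  have hsumZ : ∑ x ∈ Z, x^2 = 0 := by
    apply Finset.sum_eq_zero
    intro x hx
    simp only [hZ, Finset.mem_filter] at hx
    rw [hx.2]; ring
  refine ⟨T, fun x hx => (Finset.mem_filter.mp hx).2, ?_, ?_⟩
  · rw [hSeq, Finset.card_union_of_disjoint hdisjTNZ, Finset.card_union_of_disjoint hdisjTN,
      hcardN, hZcard, ← hSeq]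
    ring
  · rw [hSeq, Finset.sum_union hdisjTNZ, Finset.sum_union hdisjTN, hsumN, hsumZ]
    ring

/-! ### The Pythagorean families -/

def aa (k : ℕ) : ℚ := (2*k+3) / (2*k^2+6*k+5)
def bb (k : ℕ) : ℚ := (2*k^2+6*k+4) / (2*k^2+6*k+5)

lemma den_pos (k : ℕ) : (0:ℚ) < 2*(k:ℚ)^2+6*k+5 := by positivity

lemma aa_pos (k : ℕ) : 0 < aa k := by
  unfold aa; apply div_pos _ (den_pos k); positivity

lemma bb_pos (k : ℕ) : 0 < bb k := by
  unfold bb; apply div_pos _ (den_pos k); positivity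

lemma sq_one (k : ℕ) : aa k ^ 2 + bb k ^ 2 = 1 := by
  unfold aa bb
  have h := (den_pos k).ne'
  field_simp
  ring

lemma aa_le (k : ℕ) : aa k ≤ 3/5 := by
  unfold aa
  rw [div_le_div_iff₀ (den_pos k) (by norm_num)]
  have : (0:ℚ) ≤ (k:ℚ) := Nat.cast_nonneg k
  nlinarith

lemma bb_ge (k : ℕ) : 4/5 ≤ bb k := by
  unfold bb
  rw [le_div_iff₀ (den_pos k)]
  have : (0:ℚ) ≤ (k:ℚ) := Nat.cast_nonneg k
  nlinarith

lemma bb_lt_one (k : ℕ) : bb k < 1 := by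
  unfold bb
  rw [div_lt_one (den_pos k)]
  linarith

lemma aa_lt_bb (j k : ℕ) : aa j < bb k :=
  lt_of_le_of_lt (aa_le j) (lt_of_lt_of_le (by norm_num) (bb_ge k))

lemma aa_anti : StrictAnti aa := by
  apply strictAnti_nat_of_succ_lt
  intro k
  unfold aa
  rw [div_lt_div_iff₀ (den_pos (k+1)) (den_pos k)]
  have : (0:ℚ) ≤ (k:ℚ) := Nat.cast_nonneg k
  push_cast
  nlinarith

lemma bb_mono : StrictMono bb := by
  apply strictMono_nat_of_lt_succ
  intro k
  unfold bb
  rw [div_lt_div_iff₀ (den_pos k) (den_pos (k+1))]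
  have : (0:ℚ) ≤ (k:ℚ) := Nat.cast_nonneg k
  push_cast
  nlinarith

lemma aa_ne (k : ℕ) (p q : ℕ) (hq : 0 < q)
    (h : ¬ ((2*k+3) * q = p * (2*k^2+6*k+5))) : aa k ≠ (p : ℚ)/(q : ℚ) := by
  intro heq
  unfold aa at heq
  have hq' : ((q:ℚ)) ≠ 0 := by positivity
  rw [div_eq_div_iff (den_pos k).ne' hq'] at heq
  apply h
  exact_mod_cast heq

lemma aa_ne_half (k : ℕ) : aa k ≠ 1/2 := by
  have := aa_ne k 1 2 (by norm_num) ?_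
  · simpa using this
  · intro h
    generalize k^2 = m at h
    omega

lemma aa_ne_third (k : ℕ) : aa k ≠ 1/3 := by
  have := aa_ne k 1 3 (by norm_num) ?_
  · simpa using this
  · intro h
    have hm : k^2 = 2 := by
      generalize hg : k^2 = m at h
      omega
    rcases Nat.lt_or_ge k 2 with hk | hk
    · interval_cases k <;> simp_all
    · nlinarith

lemma aa_ne_sixth (k : ℕ) : aa k ≠ 1/6 := by
  have := aa_ne k 1 6 (by norm_num) ?_
  · simpa using this
  · intro h
    generalize k^2 = m at h
    omega

/-! ### Building blocks -/

noncomputable def T0 (m : ℕ) : Finset ℚ := (Finset.range m).image aa ∪ (Finset.range m).image bb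

lemma T0_disj (m : ℕ) : Disjoint ((Finset.range m).image aa) ((Finset.range m).image bb) := by
  rw [Finset.disjoint_left]
  rintro x hx hx'
  obtain ⟨j, _, rfl⟩ := Finset.mem_image.mp hx
  obtain ⟨k, _, hk⟩ := Finset.mem_image.mp hx'
  exact absurd hk (aa_lt_bb j k).ne'

lemma T0_card (m : ℕ) : (T0 m).card = 2 * m := by
  rw [T0, Finset.card_union_of_disjoint (T0_disj m),
    Finset.card_image_of_injective _ aa_anti.injective,
    Finset.card_image_of_injective _ bb_mono.injective, Finset.card_range]
  ring

lemma T0_sum (m : ℕ) : ∑ x ∈ T0 m, x^2 = m := by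
  rw [T0, Finset.sum_union (T0_disj m),
    Finset.sum_image (fun x _ y _ h => aa_anti.injective h),
    Finset.sum_image (fun x _ y _ h => bb_mono.injective h),
    ← Finset.sum_add_distrib]
  rw [Finset.sum_congr rfl (fun k _ => sq_one k), Finset.sum_const, Finset.card_range]
  simp

lemma T0_pos (m : ℕ) : ∀ x ∈ T0 m, 0 < x := by
  intro x hx
  rw [T0, Finset.mem_union] at hx
  rcases hx with hx | hx <;> obtain ⟨k, _, rfl⟩ := Finset.mem_image.mp hx
  · exact aa_pos k
  · exact bb_pos k

lemma T0_notMem (m : ℕ) (x : ℚ) (h1 : ∀ k, aa k ≠ x) (h2 : ∀ k, bb k ≠ x) : x ∉ T0 m := by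
  intro hx
  rw [T0, Finset.mem_union] at hx
  rcases hx with hx | hx <;> obtain ⟨k, _, hk⟩ := Finset.mem_image.mp hx
  · exact h1 k hk
  · exact h2 k hk

lemma half_notMem (m : ℕ) : (1/2 : ℚ) ∉ T0 m :=
  T0_notMem m _ aa_ne_half
    (fun k => ne_of_gt (lt_of_lt_of_le (by norm_num) (bb_ge k)))

lemma one_not_mem (m : ℕ) : (1 : ℚ) ∉ T0 m :=
  T0_notMem m _ (fun k => ne_of_lt (lt_of_le_of_lt (aa_le k) (by norm_num)))
    (fun k => ne_of_lt (bb_lt_one k))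

lemma sevensixth_notMem (m : ℕ) : (7/6 : ℚ) ∉ T0 m :=
  T0_notMem m _ (fun k => ne_of_lt (lt_of_le_of_lt (aa_le k) (by norm_num)))
    (fun k => ne_of_lt (lt_of_lt_of_le (bb_lt_one k) (by norm_num)))

lemma third_notMem (m : ℕ) : (1/3 : ℚ) ∉ T0 m :=
  T0_notMem m _ aa_ne_third
    (fun k => ne_of_gt (lt_of_lt_of_le (by norm_num) (bb_ge k)))

lemma sixth_notMem (m : ℕ) : (1/6 : ℚ) ∉ T0 m :=
  T0_notMem m _ aa_ne_sixth
    (fun k => ne_of_gt (lt_of_lt_of_le (by norm_num) (bb_ge k)))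

noncomputable def mk (T : Finset ℚ) : Finset ℚ := T ∪ T.image (fun x => -x)

lemma mk_disj (T : Finset ℚ) (hT : ∀ x ∈ T, 0 < x) : Disjoint T (T.image (fun x => -x)) := by
  rw [Finset.disjoint_left]
  rintro x hx hx'
  obtain ⟨t, ht, rfl⟩ := Finset.mem_image.mp hx'
  linarith [hT t ht, hT _ hx]

lemma mk_card (T : Finset ℚ) (hT : ∀ x ∈ T, 0 < x) : (mk T).card = 2 * T.card := by
  rw [mk, Finset.card_union_of_disjoint (mk_disj T hT),
    Finset.card_image_of_injective _ neg_injective]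
  ring

lemma mk_sum (T : Finset ℚ) (hT : ∀ x ∈ T, 0 < x) :
    ∑ x ∈ mk T, x^2 = 2 * ∑ x ∈ T, x^2 := by
  rw [mk, Finset.sum_union (mk_disj T hT),
    Finset.sum_image (fun x _ y _ h => neg_injective h)]
  rw [Finset.sum_congr rfl (fun x _ => by ring : ∀ x ∈ T, (-x)^2 = x^2)]
  ring

lemma mk_neg (T : Finset ℚ) : ∀ x ∈ mk T, -x ∈ mk T := by
  intro x hx
  rw [mk, Finset.mem_union] at hx ⊢
  rcases hx with hx | hx
  · exact Or.inr (Finset.mem_image.mpr ⟨x, hx, rfl⟩)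
  · obtain ⟨t, ht, rfl⟩ := Finset.mem_image.mp hx
    exact Or.inl (by simpa using ht)

lemma mk_zero (T : Finset ℚ) (hT : ∀ x ∈ T, 0 < x) : (0:ℚ) ∉ mk T := by
  intro hx
  rw [mk, Finset.mem_union] at hx
  rcases hx with hx | hx
  · exact absurd (hT 0 hx) (lt_irrefl 0)
  · obtain ⟨t, ht, h⟩ := Finset.mem_image.mp hx
    have ht' := hT t ht
    have : t = 0 := by linarith [h, neg_eq_zero.mp h]
    simp [this] at ht'

/-! ### Assembly -/

lemma even_case (T : Finset ℚ) (hpos : ∀ x ∈ T, 0 < x) (n : ℕ)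
    (hc : 2 * T.card = n) (hs : 2 * ∑ x ∈ T, x^2 = (n:ℚ)/2) :
    ∃ S : Finset ℚ, S.card = n ∧ (∀ x ∈ S, -x ∈ S) ∧ ∑ x ∈ S, x ^ 2 = (n : ℚ) / 2 :=
  ⟨mk T, by rw [mk_card T hpos, hc], mk_neg T, by rw [mk_sum T hpos, hs]⟩

lemma odd_case (T : Finset ℚ) (hpos : ∀ x ∈ T, 0 < x) (n : ℕ)
    (hc : 2 * T.card + 1 = n) (hs : 2 * ∑ x ∈ T, x^2 = (n:ℚ)/2) :
    ∃ S : Finset ℚ, S.card = n ∧ (∀ x ∈ S, -x ∈ S) ∧ ∑ x ∈ S, x ^ 2 = (n : ℚ) / 2 := by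
  refine ⟨insert 0 (mk T), ?_, ?_, ?_⟩
  · rw [Finset.card_insert_of_notMem (mk_zero T hpos), mk_card T hpos]
    omega
  · intro x hx
    rcases Finset.mem_insert.mp hx with rfl | hx
    · simpa using Finset.mem_insert_self (0:ℚ) (mk T)
    · exact Finset.mem_insert_of_mem (mk_neg T x hx)
  · rw [Finset.sum_insert (mk_zero T hpos), mk_sum T hpos, hs]
    norm_num

lemma union_pos (m : ℕ) (E : Finset ℚ) (hE : ∀ x ∈ E, 0 < x) :
    ∀ x ∈ T0 m ∪ E, 0 < x := by
  intro x hx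
  rcases Finset.mem_union.mp hx with hx | hx
  · exact T0_pos m x hx
  · exact hE x hx

/-- Theorem 1.1 (Hermite case): there exists an antipodal (negation-closed) set of `n`
rational points with sum of squares `n/2` iff `n ∉ {1,2,3,7}`. -/
theorem stmt_0 (n : ℕ) (hn : 0 < n) :
    (∃ S : Finset ℚ, S.card = n ∧ (∀ x ∈ S, -x ∈ S) ∧
      ∑ x ∈ S, x ^ 2 = (n : ℚ) / 2) ↔ n ∉ ({1, 2, 3, 7} : Set ℕ) := by
  constructor
  · rintro ⟨S, hcard, hneg, hsum⟩ hmem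
    obtain ⟨T, hTpos, hTcard, hTsum⟩ := decomp S hneg
    simp only [Set.mem_insert_iff, Set.mem_singleton_iff] at hmem
    rw [hcard] at hTcard
    rcases hmem with rfl | rfl | rfl | rfl
    · -- n = 1
      have hT0 : T.card = 0 := by split_ifs at hTcard <;> omega
      rw [Finset.card_eq_zero.mp hT0] at hTsum
      simp at hTsum
      rw [hTsum] at hsum
      norm_num at hsum
    · -- n = 2
      have hT1 : T.card = 1 := by split_ifs at hTcard <;> omega
      obtain ⟨x, rfl⟩ := Finset.card_eq_one.mp hT1
      rw [Finset.sum_singleton] at hTsum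
      rw [hTsum] at hsum
      refine no_sq 2 (Or.inl rfl) (2*x) ?_
      push_cast
      nlinarith [hsum]
    · -- n = 3
      have hT1 : T.card = 1 := by split_ifs at hTcard <;> omega
      obtain ⟨x, rfl⟩ := Finset.card_eq_one.mp hT1
      rw [Finset.sum_singleton] at hTsum
      rw [hTsum] at hsum
      refine no_sq 3 (Or.inr rfl) (2*x) ?_
      push_cast
      nlinarith [hsum]
    · -- n = 7
      have hT3 : T.card = 3 := by split_ifs at hTcard <;> omega
      obtain ⟨x, y, z, hxy, hxz, hyz, rfl⟩ := Finset.card_eq_three.mp hT3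
      have hsum3 : ∑ w ∈ ({x, y, z} : Finset ℚ), w^2 = x^2 + y^2 + z^2 := by
        rw [Finset.sum_insert (by simp [hxy, hxz]), Finset.sum_insert (by simp [hyz]),
          Finset.sum_singleton]
        ring
      rw [hsum3] at hTsum
      rw [hTsum] at hsum
      refine no_seven (2*x) (2*y) (2*z) ?_
      nlinarith [hsum]
  · intro hmem
    simp only [Set.mem_insert_iff, Set.mem_singleton_iff, not_or] at hmem
    obtain ⟨h1, h2, h3, h7⟩ := hmem
    have hcases : (∃ m, n = 4*m+4) ∨ (∃ m, n = 4*m+5) ∨ (∃ m, n = 4*m+6) ∨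
        (∃ m, n = 4*m+11) := by
      have hm : n % 4 = 0 ∨ n % 4 = 1 ∨ n % 4 = 2 ∨ n % 4 = 3 := by omega
      rcases hm with h | h | h | h
      · exact Or.inl ⟨n/4 - 1, by omega⟩
      · exact Or.inr (Or.inl ⟨n/4 - 1, by omega⟩)
      · exact Or.inr (Or.inr (Or.inl ⟨n/4 - 1, by omega⟩))
      · exact Or.inr (Or.inr (Or.inr ⟨n/4 - 2, by omega⟩))
    rcases hcases with ⟨m, rfl⟩ | ⟨m, rfl⟩ | ⟨m, rfl⟩ | ⟨m, rfl⟩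
    · -- n = 4m+4
      refine even_case (T0 (m+1)) (T0_pos (m+1)) _ ?_ ?_
      · rw [T0_card]; ring
      · rw [T0_sum]; push_cast; ring
    · -- n = 4m+5 : extras {1/2, 1}
      have hdisj : Disjoint (T0 m) ({1/2, 1} : Finset ℚ) := by
        rw [Finset.disjoint_right]
        intro x hx
        rcases Finset.mem_insert.mp hx with rfl | hx
        · exact half_notMem m
        · rw [Finset.mem_singleton.mp hx]
          exact one_not_mem m
      have hposE : ∀ x ∈ ({1/2, 1} : Finset ℚ), 0 < x := by
        intro x hx
        rcases Finset.mem_insert.mp hx with rfl | hx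
        · norm_num
        · rw [Finset.mem_singleton.mp hx]; norm_num
      have hcE : ({1/2, 1} : Finset ℚ).card = 2 := by norm_num
      have hsE : ∑ x ∈ ({1/2, 1} : Finset ℚ), x^2 = 5/4 := by norm_num
      refine odd_case (T0 m ∪ {1/2, 1}) (union_pos m _ hposE) _ ?_ ?_
      · rw [Finset.card_union_of_disjoint hdisj, T0_card, hcE]
        omega
      · rw [Finset.sum_union hdisj, T0_sum, hsE]
        push_cast
        ring
    · -- n = 4m+6 : extras {7/6, 1/3, 1/6}
      have hdisj : Disjoint (T0 m) ({7/6, 1/3, 1/6} : Finset ℚ) := by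
        rw [Finset.disjoint_right]
        intro x hx
        rcases Finset.mem_insert.mp hx with rfl | hx
        · exact sevensixth_notMem m
        · rcases Finset.mem_insert.mp hx with rfl | hx
          · exact third_notMem m
          · rw [Finset.mem_singleton.mp hx]
            exact sixth_notMem m
      have hposE : ∀ x ∈ ({7/6, 1/3, 1/6} : Finset ℚ), 0 < x := by
        intro x hx
        rcases Finset.mem_insert.mp hx with rfl | hx
        · norm_num
        · rcases Finset.mem_insert.mp hx with rfl | hx
          · norm_num
          · rw [Finset.mem_singleton.mp hx]; norm_num
      have hcE : ({7/6, 1/3, 1/6} : Finset ℚ).card = 3 := by norm_num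
      have hsE : ∑ x ∈ ({7/6, 1/3, 1/6} : Finset ℚ), x^2 = 3/2 := by norm_num
      refine even_case (T0 m ∪ {7/6, 1/3, 1/6}) (union_pos m _ hposE) _ ?_ ?_
      · rw [Finset.card_union_of_disjoint hdisj, T0_card, hcE]
        omega
      · rw [Finset.sum_union hdisj, T0_sum, hsE]
        push_cast
        ring
    · -- n = 4m+11 : extras {1/2, 1, 7/6, 1/3, 1/6}
      have hdisj : Disjoint (T0 m) ({1/2, 1, 7/6, 1/3, 1/6} : Finset ℚ) := by
        rw [Finset.disjoint_right]
        intro x hx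
        rcases Finset.mem_insert.mp hx with rfl | hx
        · exact half_notMem m
        · rcases Finset.mem_insert.mp hx with rfl | hx
          · exact one_not_mem m
          · rcases Finset.mem_insert.mp hx with rfl | hx
            · exact sevensixth_notMem m
            · rcases Finset.mem_insert.mp hx with rfl | hx
              · exact third_notMem m
              · rw [Finset.mem_singleton.mp hx]
                exact sixth_notMem m
      have hposE : ∀ x ∈ ({1/2, 1, 7/6, 1/3, 1/6} : Finset ℚ), 0 < x := by
        intro x hx
        rcases Finset.mem_insert.mp hx with rfl | hx
        · norm_num
        · rcases Finset.mem_insert.mp hx with rfl | hx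
          · norm_num
          · rcases Finset.mem_insert.mp hx with rfl | hx
            · norm_num
            · rcases Finset.mem_insert.mp hx with rfl | hx
              · norm_num
              · rw [Finset.mem_singleton.mp hx]; norm_num
      have hcE : ({1/2, 1, 7/6, 1/3, 1/6} : Finset ℚ).card = 5 := by norm_num
      have hsE : ∑ x ∈ ({1/2, 1, 7/6, 1/3, 1/6} : Finset ℚ), x^2 = 11/4 := by norm_num
      refine odd_case (T0 m ∪ {1/2, 1, 7/6, 1/3, 1/6}) (union_pos m _ hposE) _ ?_ ?_
      · rw [Finset.card_union_of_disjoint hdisj, T0_card, hcE]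
        omega
      · rw [Finset.sum_union hdisj, T0_sum, hsE]
        push_cast
        ring
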